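/- Let G and H be finite simple graphs such that H has at least one vertex, and let h be a surjective p-morphism from Pos(G) onto Pos(H). Then h(V^G) ⊆ V^H. Moreover, for every v ∈ V^G: if h(∞_a) = ∞_a then h(v_a) = h(v)_a and h(v_b) = h(v)_b, and if h(∞_a) = ∞_b then h(v_a) = h(v)_b and h(v_b) = h(v)_a. -/
import Mathlib


/-- The carrier of the poset `Pos(G)`: vertices, two copies of the vertices,
two copies of the edges, and four auxiliary elements. -/
inductive PosElem (V E : Type) : Type where
  | ver (v : V)
  | verA (v : V)
  | verB (v : V)
  | edge1 (e : E)
  | edge2 (e : E)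
  | top1
  | top2
  | infA
  | infB

/-- The covering relation of the poset `Pos(G)`, for a graph `G` together with a
choice `ε` of an ordered pair of endpoints for each edge. -/
inductive PosCov {V : Type} (G : SimpleGraph V) (ε : ↥G.edgeSet → V × V) :
    PosElem V ↥G.edgeSet → PosElem V ↥G.edgeSet → Prop where
  | ver_verA (v : V) : PosCov G ε (.ver v) (.verA v)
  | ver_verB (v : V) : PosCov G ε (.ver v) (.verB v)
  | verA_infA (v : V) : PosCov G ε (.verA v) .infA
  | verB_infB (v : V) : PosCov G ε (.verB v) .infB
  | edge1_top1 (e : ↥G.edgeSet) : PosCov G ε (.edge1 e) .top1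
  | edge1_top2 (e : ↥G.edgeSet) : PosCov G ε (.edge1 e) .top2
  | edge2_top1 (e : ↥G.edgeSet) : PosCov G ε (.edge2 e) .top1
  | edge2_top2 (e : ↥G.edgeSet) : PosCov G ε (.edge2 e) .top2
  | isolA_top1 (v : V) (hv : ∀ w, ¬ G.Adj v w) : PosCov G ε (.verA v) .top1
  | isolA_top2 (v : V) (hv : ∀ w, ¬ G.Adj v w) : PosCov G ε (.verA v) .top2
  | isolB_top1 (v : V) (hv : ∀ w, ¬ G.Adj v w) : PosCov G ε (.verB v) .top1
  | isolB_top2 (v : V) (hv : ∀ w, ¬ G.Adj v w) : PosCov G ε (.verB v) .top2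
  | ua_edge1 (e : ↥G.edgeSet) : PosCov G ε (.verA (ε e).1) (.edge1 e)
  | vb_edge1 (e : ↥G.edgeSet) : PosCov G ε (.verB (ε e).2) (.edge1 e)
  | ub_edge2 (e : ↥G.edgeSet) : PosCov G ε (.verB (ε e).1) (.edge2 e)
  | va_edge2 (e : ↥G.edgeSet) : PosCov G ε (.verA (ε e).2) (.edge2 e)

/-- The order of `Pos(G)`: the reflexive-transitive closure of the covering relation. -/
def PosLe {V : Type} (G : SimpleGraph V) (ε : ↥G.edgeSet → V × V)
    (x y : PosElem V ↥G.edgeSet) : Prop :=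
  Relation.ReflTransGen (PosCov G ε) x y

/-- `ε` assigns to every edge an ordered pair of its two endpoints. -/
def OrientOK {V : Type} (G : SimpleGraph V) (ε : ↥G.edgeSet → V × V) : Prop :=
  ∀ e : ↥G.edgeSet, (e : Sym2 V) = s((ε e).1, (ε e).2)

/-- A p-morphism with respect to given order relations: the homomorphism property (HP)
and the backward property (BP). -/
def IsPMorphismRel {α β : Type} (leP : α → α → Prop) (leQ : β → β → Prop)
    (h : α → β) : Prop :=
  (∀ x y, leP x y → leQ (h x) (h y)) ∧
  (∀ (x : α) (y : β), leQ (h x) y → ∃ z : α, leP x z ∧ h z = y)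

namespace PosAux

variable {V : Type} {G : SimpleGraph V} {ε : ↥G.edgeSet → V × V}

/-- Explicit description of the order of `Pos(G)`. -/
def PosLe' {V : Type} {G : SimpleGraph V} (ε : ↥G.edgeSet → V × V) :
    PosElem V ↥G.edgeSet → PosElem V ↥G.edgeSet → Prop
  | .ver v, .ver w => v = w
  | .ver v, .verA w => v = w
  | .ver v, .verB w => v = w
  | .ver v, .edge1 e => v = (ε e).1 ∨ v = (ε e).2
  | .ver v, .edge2 e => v = (ε e).1 ∨ v = (ε e).2
  | .ver _, .top1 => True
  | .ver _, .top2 => True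
  | .ver _, .infA => True
  | .ver _, .infB => True
  | .verA v, .verA w => v = w
  | .verA v, .edge1 e => v = (ε e).1
  | .verA v, .edge2 e => v = (ε e).2
  | .verA _, .top1 => True
  | .verA _, .top2 => True
  | .verA _, .infA => True
  | .verB v, .verB w => v = w
  | .verB v, .edge1 e => v = (ε e).2
  | .verB v, .edge2 e => v = (ε e).1
  | .verB _, .top1 => True
  | .verB _, .top2 => True
  | .verB _, .infB => True
  | .edge1 e, .edge1 f => e = f
  | .edge1 _, .top1 => True
  | .edge1 _, .top2 => True
  | .edge2 e, .edge2 f => e = f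
  | .edge2 _, .top1 => True
  | .edge2 _, .top2 => True
  | .top1, .top1 => True
  | .top2, .top2 => True
  | .infA, .infA => True
  | .infB, .infB => True
  | _, _ => False

set_option maxHeartbeats 1000000 in
lemma posLe'_refl (x : PosElem V ↥G.edgeSet) : PosLe' ε x x := by
  cases x <;> simp [PosLe']

set_option maxHeartbeats 4000000 in
lemma posLe'_step {x y z : PosElem V ↥G.edgeSet} (h1 : PosLe' ε x y)
    (h2 : PosCov G ε y z) : PosLe' ε x z := by
  cases h2 <;> cases x <;> simp_all [PosLe']

lemma posLe_posLe' {x y : PosElem V ↥G.edgeSet} (h : PosLe G ε x y) : PosLe' ε x y := by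
  induction h with
  | refl => exact posLe'_refl x
  | tail _ h2 ih => exact posLe'_step ih h2

lemma exists_endpoint (hε : OrientOK G ε) {v : V} (hv : ∃ w, G.Adj v w) :
    ∃ e : ↥G.edgeSet, v = (ε e).1 ∨ v = (ε e).2 := by
  obtain ⟨w, hw⟩ := hv
  let e : ↥G.edgeSet := ⟨s(v, w), G.mem_edgeSet.mpr hw⟩
  have h3 : s(v, w) = s((ε e).1, (ε e).2) := hε e
  rcases Sym2.eq_iff.mp h3 with ⟨h4, _⟩ | ⟨h4, _⟩
  · exact ⟨e, Or.inl h4⟩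
  · exact ⟨e, Or.inr h4⟩

lemma le_verA_top1 (hε : OrientOK G ε) (v : V) : PosLe G ε (.verA v) .top1 := by
  by_cases hv : ∀ w, ¬ G.Adj v w
  · exact Relation.ReflTransGen.single (.isolA_top1 v hv)
  · push_neg at hv
    obtain ⟨e, h4 | h4⟩ := exists_endpoint hε hv
    · exact Relation.ReflTransGen.head (by rw [h4]; exact .ua_edge1 e)
        (Relation.ReflTransGen.single (.edge1_top1 e))
    · exact Relation.ReflTransGen.head (by rw [h4]; exact .va_edge2 e)
        (Relation.ReflTransGen.single (.edge2_top1 e))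

lemma le_verA_top2 (hε : OrientOK G ε) (v : V) : PosLe G ε (.verA v) .top2 := by
  by_cases hv : ∀ w, ¬ G.Adj v w
  · exact Relation.ReflTransGen.single (.isolA_top2 v hv)
  · push_neg at hv
    obtain ⟨e, h4 | h4⟩ := exists_endpoint hε hv
    · exact Relation.ReflTransGen.head (by rw [h4]; exact .ua_edge1 e)
        (Relation.ReflTransGen.single (.edge1_top2 e))
    · exact Relation.ReflTransGen.head (by rw [h4]; exact .va_edge2 e)
        (Relation.ReflTransGen.single (.edge2_top2 e))

lemma le_verB_top1 (hε : OrientOK G ε) (v : V) : PosLe G ε (.verB v) .top1 := by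
  by_cases hv : ∀ w, ¬ G.Adj v w
  · exact Relation.ReflTransGen.single (.isolB_top1 v hv)
  · push_neg at hv
    obtain ⟨e, h4 | h4⟩ := exists_endpoint hε hv
    · exact Relation.ReflTransGen.head (by rw [h4]; exact .ub_edge2 e)
        (Relation.ReflTransGen.single (.edge2_top1 e))
    · exact Relation.ReflTransGen.head (by rw [h4]; exact .vb_edge1 e)
        (Relation.ReflTransGen.single (.edge1_top1 e))

lemma le_verB_top2 (hε : OrientOK G ε) (v : V) : PosLe G ε (.verB v) .top2 := by
  by_cases hv : ∀ w, ¬ G.Adj v w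
  · exact Relation.ReflTransGen.single (.isolB_top2 v hv)
  · push_neg at hv
    obtain ⟨e, h4 | h4⟩ := exists_endpoint hε hv
    · exact Relation.ReflTransGen.head (by rw [h4]; exact .ub_edge2 e)
        (Relation.ReflTransGen.single (.edge2_top2 e))
    · exact Relation.ReflTransGen.head (by rw [h4]; exact .vb_edge1 e)
        (Relation.ReflTransGen.single (.edge1_top2 e))

/-- The four maximal elements. -/
def IsMax4 {V E : Type} (x : PosElem V E) : Prop :=
  x = .top1 ∨ x = .top2 ∨ x = .infA ∨ x = .infB

set_option maxHeartbeats 4000000 in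
lemma max4_le {x y : PosElem V ↥G.edgeSet} (hx : IsMax4 x) (h : PosLe G ε x y) : y = x := by
  have h' := posLe_posLe' h
  rcases hx with rfl | rfl | rfl | rfl <;> cases y <;> simp_all [PosLe']

lemma below_max4 (x : PosElem V ↥G.edgeSet) : ∃ z, IsMax4 z ∧ PosLe G ε x z := by
  cases x with
  | ver v => exact ⟨.infA, by simp [IsMax4], Relation.ReflTransGen.head (.ver_verA v)
      (Relation.ReflTransGen.single (.verA_infA v))⟩
  | verA v => exact ⟨.infA, by simp [IsMax4], Relation.ReflTransGen.single (.verA_infA v)⟩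
  | verB v => exact ⟨.infB, by simp [IsMax4], Relation.ReflTransGen.single (.verB_infB v)⟩
  | edge1 e => exact ⟨.top1, by simp [IsMax4], Relation.ReflTransGen.single (.edge1_top1 e)⟩
  | edge2 e => exact ⟨.top1, by simp [IsMax4], Relation.ReflTransGen.single (.edge2_top1 e)⟩
  | top1 => exact ⟨.top1, by simp [IsMax4], Relation.ReflTransGen.refl⟩
  | top2 => exact ⟨.top2, by simp [IsMax4], Relation.ReflTransGen.refl⟩
  | infA => exact ⟨.infA, by simp [IsMax4], Relation.ReflTransGen.refl⟩
  | infB => exact ⟨.infB, by simp [IsMax4], Relation.ReflTransGen.refl⟩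

/-- Enumeration of the four maximal elements. -/
def mx4 {V E : Type} (i : Fin 4) : PosElem V E :=
  if i.val = 0 then .infA else if i.val = 1 then .infB else if i.val = 2 then .top1 else .top2

@[simp] lemma mx4_0 {V E : Type} : (mx4 0 : PosElem V E) = .infA := rfl
@[simp] lemma mx4_1 {V E : Type} : (mx4 1 : PosElem V E) = .infB := rfl
@[simp] lemma mx4_2 {V E : Type} : (mx4 2 : PosElem V E) = .top1 := rfl
@[simp] lemma mx4_3 {V E : Type} : (mx4 3 : PosElem V E) = .top2 := rfl

lemma mx4_inj {V E : Type} (i j : Fin 4) (hij : mx4 (V := V) (E := E) i = mx4 j) : i = j := by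
  fin_cases i <;> fin_cases j <;> simp_all [mx4]

lemma mx4_isMax4 {V E : Type} (i : Fin 4) : IsMax4 (mx4 (V := V) (E := E) i) := by
  fin_cases i <;> simp [mx4, IsMax4]

lemma fin_edge1 : ∀ s t : Fin 4, (s = 0 ∨ t = 0) → (s = 2 ∨ t = 2) → (s = 3 ∨ t = 3) → False := by
  decide

lemma fin_edge2 : ∀ s t : Fin 4, (s = 1 ∨ t = 1) → (s = 2 ∨ t = 2) → (s = 3 ∨ t = 3) → False := by
  decide

set_option synthInstance.maxHeartbeats 1000000 in
set_option synthInstance.maxSize 2000 in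
set_option maxHeartbeats 1000000 in
lemma key_fin : ∀ a b s t : Fin 4,
    (∀ i : Fin 4, i = a ∨ i = b ∨ i = s ∨ i = t) →
    ((a ≠ 1 ∧ s ≠ 1 ∧ t ≠ 1 ∧ (0 = a ∨ 0 = s ∨ 0 = t) ∧ (2 = a ∨ 2 = s ∨ 2 = t) ∧
        (3 = a ∨ 3 = s ∨ 3 = t)) ∨
      (b ≠ 1 ∧ s ≠ 1 ∧ t ≠ 1 ∧ (0 = b ∨ 0 = s ∨ 0 = t) ∧ (2 = b ∨ 2 = s ∨ 2 = t) ∧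
        (3 = b ∨ 3 = s ∨ 3 = t))) →
    ((a ≠ 0 ∧ s ≠ 0 ∧ t ≠ 0 ∧ (1 = a ∨ 1 = s ∨ 1 = t) ∧ (2 = a ∨ 2 = s ∨ 2 = t) ∧
        (3 = a ∨ 3 = s ∨ 3 = t)) ∨
      (b ≠ 0 ∧ s ≠ 0 ∧ t ≠ 0 ∧ (1 = b ∨ 1 = s ∨ 1 = t) ∧ (2 = b ∨ 2 = s ∨ 2 = t) ∧
        (3 = b ∨ 3 = s ∨ 3 = t))) →
    (s = 2 ∨ s = 3) ∧ (t = 2 ∨ t = 3) ∧ ((a = 0 ∧ b = 1) ∨ (a = 1 ∧ b = 0)) := by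
  decide

end PosAux

open PosAux

theorem vertices_map_into_vertices {VG VH : Type} [Fintype VG] [Fintype VH] [Nonempty VH]
    (G : SimpleGraph VG) (H : SimpleGraph VH)
    (εG : ↥G.edgeSet → VG × VG) (hεG : OrientOK G εG)
    (εH : ↥H.edgeSet → VH × VH) (hεH : OrientOK H εH)
    (h : PosElem VG ↥G.edgeSet → PosElem VH ↥H.edgeSet)
    (hsurj : Function.Surjective h)
    (hpm : IsPMorphismRel (PosLe G εG) (PosLe H εH) h) :
    (∀ v : VG, ∃ w : VH, h (PosElem.ver v) = PosElem.ver w) ∧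
    (∀ (v : VG) (w : VH), h (PosElem.ver v) = PosElem.ver w →
      (h PosElem.infA = PosElem.infA →
        h (PosElem.verA v) = PosElem.verA w ∧ h (PosElem.verB v) = PosElem.verB w) ∧
      (h PosElem.infA = PosElem.infB →
        h (PosElem.verA v) = PosElem.verB w ∧ h (PosElem.verB v) = PosElem.verA w)) := by
  obtain ⟨hm, hb⟩ := hpm
  have himg : ∀ x : PosElem VG ↥G.edgeSet, IsMax4 x → ∀ y, PosLe H εH (h x) y → y = h x := by
    intro x hx y hy
    obtain ⟨z, hz1, hz2⟩ := hb x y hy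
    rw [← hz2, max4_le hx hz1]
  have himg4 : ∀ x : PosElem VG ↥G.edgeSet, IsMax4 x → IsMax4 (h x) := by
    intro x hx
    cases hhx : h x with
    | ver u =>
      have := himg x hx (.verA u)
        (by rw [hhx]; exact Relation.ReflTransGen.single (PosCov.ver_verA u))
      rw [hhx] at this; exact absurd this (by simp)
    | verA u =>
      have := himg x hx .infA
        (by rw [hhx]; exact Relation.ReflTransGen.single (PosCov.verA_infA u))
      rw [hhx] at this; exact absurd this (by simp)
    | verB u =>
      have := himg x hx .infB
        (by rw [hhx]; exact Relation.ReflTransGen.single (PosCov.verB_infB u))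
      rw [hhx] at this; exact absurd this (by simp)
    | edge1 e =>
      have := himg x hx .top1
        (by rw [hhx]; exact Relation.ReflTransGen.single (PosCov.edge1_top1 e))
      rw [hhx] at this; exact absurd this (by simp)
    | edge2 e =>
      have := himg x hx .top1
        (by rw [hhx]; exact Relation.ReflTransGen.single (PosCov.edge2_top1 e))
      rw [hhx] at this; exact absurd this (by simp)
    | top1 => simp [IsMax4]
    | top2 => simp [IsMax4]
    | infA => simp [IsMax4]
    | infB => simp [IsMax4]
  have hsurjmax : ∀ y : PosElem VH ↥H.edgeSet, IsMax4 y →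
      (y = h PosElem.infA ∨ y = h PosElem.infB ∨ y = h PosElem.top1 ∨ y = h PosElem.top2) := by
    intro y hy
    obtain ⟨x, hx⟩ := hsurj y
    obtain ⟨z, hz1, hz2⟩ := below_max4 (ε := εG) x
    have h1 : PosLe H εH y (h z) := by rw [← hx]; exact hm x z hz2
    have h2 : h z = y := max4_le hy h1
    rcases hz1 with rfl | rfl | rfl | rfl
    · exact Or.inr (Or.inr (Or.inl h2.symm))
    · exact Or.inr (Or.inr (Or.inr h2.symm))
    · exact Or.inl h2.symm
    · exact Or.inr (Or.inl h2.symm)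
  have hMonto : ∀ (x : PosElem VG ↥G.edgeSet) (y : PosElem VH ↥H.edgeSet), IsMax4 y →
      PosLe H εH (h x) y → ∃ z, IsMax4 z ∧ PosLe G εG x z ∧ h z = y := by
    intro x y hy hxy
    obtain ⟨z0, hz0, hz0'⟩ := hb x y hxy
    obtain ⟨z, hz1, hz2⟩ := below_max4 (ε := εG) z0
    have h1 : PosLe H εH y (h z) := by rw [← hz0']; exact hm z0 z hz2
    exact ⟨z, hz1, hz0.trans hz2, max4_le hy h1⟩
  have toIdx : ∀ x : PosElem VH ↥H.edgeSet, IsMax4 x → ∃ i : Fin 4, x = mx4 i := by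
    intro x hx
    rcases hx with rfl | rfl | rfl | rfl
    exacts [⟨2, rfl⟩, ⟨3, rfl⟩, ⟨0, rfl⟩, ⟨1, rfl⟩]
  obtain ⟨a, hia⟩ := toIdx _ (himg4 PosElem.infA (by simp [IsMax4]))
  obtain ⟨b, hib⟩ := toIdx _ (himg4 PosElem.infB (by simp [IsMax4]))
  obtain ⟨s, his⟩ := toIdx _ (himg4 PosElem.top1 (by simp [IsMax4]))
  obtain ⟨t, hit⟩ := toIdx _ (himg4 PosElem.top2 (by simp [IsMax4]))
  have hcov : ∀ i : Fin 4, i = a ∨ i = b ∨ i = s ∨ i = t := by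
    intro i
    rcases hsurjmax (mx4 i) (mx4_isMax4 i) with e | e | e | e
    · exact Or.inl (mx4_inj _ _ (e.trans hia))
    · exact Or.inr (Or.inl (mx4_inj _ _ (e.trans hib)))
    · exact Or.inr (Or.inr (Or.inl (mx4_inj _ _ (e.trans his))))
    · exact Or.inr (Or.inr (Or.inr (mx4_inj _ _ (e.trans hit))))
  have hallmax : ∀ (v : VG) (y : PosElem VH ↥H.edgeSet), IsMax4 y →
      PosLe H εH (h (PosElem.ver v)) y := by
    intro v y hy
    rcases hsurjmax y hy with rfl | rfl | rfl | rfl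
    · exact hm _ _ (Relation.ReflTransGen.head (PosCov.ver_verA v)
        (Relation.ReflTransGen.single (PosCov.verA_infA v)))
    · exact hm _ _ (Relation.ReflTransGen.head (PosCov.ver_verB v)
        (Relation.ReflTransGen.single (PosCov.verB_infB v)))
    · exact hm _ _ (Relation.ReflTransGen.head (PosCov.ver_verA v) (le_verA_top1 hεG v))
    · exact hm _ _ (Relation.ReflTransGen.head (PosCov.ver_verA v) (le_verA_top2 hεG v))
  have part1 : ∀ v : VG, ∃ w : VH, h (PosElem.ver v) = PosElem.ver w := by
    intro v
    have k1 := posLe_posLe' (hallmax v PosElem.infA (by simp [IsMax4]))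
    have k2 := posLe_posLe' (hallmax v PosElem.infB (by simp [IsMax4]))
    cases hE : h (PosElem.ver v) with
    | ver w' => exact ⟨w', rfl⟩
    | verA w' => rw [hE] at k2; simp [PosLe'] at k2
    | verB w' => rw [hE] at k1; simp [PosLe'] at k1
    | edge1 e0 => rw [hE] at k1; simp [PosLe'] at k1
    | edge2 e0 => rw [hE] at k1; simp [PosLe'] at k1
    | top1 => rw [hE] at k1; simp [PosLe'] at k1
    | top2 => rw [hE] at k1; simp [PosLe'] at k1
    | infA => rw [hE] at k2; simp [PosLe'] at k2
    | infB => rw [hE] at k1; simp [PosLe'] at k1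
  have montoA : ∀ (v' : VG) (y : PosElem VH ↥H.edgeSet), IsMax4 y →
      PosLe H εH (h (PosElem.verA v')) y → (y = mx4 a ∨ y = mx4 s ∨ y = mx4 t) := by
    intro v' y hy hle
    obtain ⟨z, hz4, hzle, hzeq⟩ := hMonto (PosElem.verA v') y hy hle
    have hz' := posLe_posLe' hzle
    rcases hz4 with rfl | rfl | rfl | rfl
    · exact Or.inr (Or.inl (hzeq.symm.trans his))
    · exact Or.inr (Or.inr (hzeq.symm.trans hit))
    · exact Or.inl (hzeq.symm.trans hia)
    · simp [PosLe'] at hz'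
  have montoB : ∀ (v' : VG) (y : PosElem VH ↥H.edgeSet), IsMax4 y →
      PosLe H εH (h (PosElem.verB v')) y → (y = mx4 b ∨ y = mx4 s ∨ y = mx4 t) := by
    intro v' y hy hle
    obtain ⟨z, hz4, hzle, hzeq⟩ := hMonto (PosElem.verB v') y hy hle
    have hz' := posLe_posLe' hzle
    rcases hz4 with rfl | rfl | rfl | rfl
    · exact Or.inr (Or.inl (hzeq.symm.trans his))
    · exact Or.inr (Or.inr (hzeq.symm.trans hit))
    · simp [PosLe'] at hz'
    · exact Or.inl (hzeq.symm.trans hib)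
  refine ⟨part1, ?_⟩
  intro v w hw
  have cvtA : ∀ j : Fin 4, (PosElem.infA : PosElem VH ↥H.edgeSet) = mx4 j → (0 : Fin 4) = j :=
    fun j e => mx4_inj 0 j (mx4_0.trans e)
  have cvtB : ∀ j : Fin 4, (PosElem.infB : PosElem VH ↥H.edgeSet) = mx4 j → (1 : Fin 4) = j :=
    fun j e => mx4_inj 1 j (mx4_1.trans e)
  have cvtT1 : ∀ j : Fin 4, (PosElem.top1 : PosElem VH ↥H.edgeSet) = mx4 j → (2 : Fin 4) = j :=
    fun j e => mx4_inj 2 j (mx4_2.trans e)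
  have cvtT2 : ∀ j : Fin 4, (PosElem.top2 : PosElem VH ↥H.edgeSet) = mx4 j → (3 : Fin 4) = j :=
    fun j e => mx4_inj 3 j (mx4_3.trans e)
  have fA : ∀ i : Fin 4, PosLe' εH (PosElem.verA w) (mx4 i) → i ≠ 1 := by
    intro i hle hi; subst hi; rw [mx4_1] at hle; simp [PosLe'] at hle
  have fB : ∀ i : Fin 4, PosLe' εH (PosElem.verB w) (mx4 i) → i ≠ 0 := by
    intro i hle hi; subst hi; rw [mx4_0] at hle; simp [PosLe'] at hle
  have pArA : PosLe H εH (PosElem.verA w) PosElem.infA :=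
    Relation.ReflTransGen.single (PosCov.verA_infA w)
  have pAT1 : PosLe H εH (PosElem.verA w) PosElem.top1 := le_verA_top1 hεH w
  have pAT2 : PosLe H εH (PosElem.verA w) PosElem.top2 := le_verA_top2 hεH w
  have pBrB : PosLe H εH (PosElem.verB w) PosElem.infB :=
    Relation.ReflTransGen.single (PosCov.verB_infB w)
  have pBT1 : PosLe H εH (PosElem.verB w) PosElem.top1 := le_verB_top1 hεH w
  have pBT2 : PosLe H εH (PosElem.verB w) PosElem.top2 := le_verB_top2 hεH w
  obtain ⟨x2, hx2⟩ := hsurj (PosElem.verA w)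
  have hx2c : (∃ u', x2 = PosElem.verA u') ∨ (∃ u', x2 = PosElem.verB u') := by
    cases x2 with
    | verA u' => exact Or.inl ⟨u', rfl⟩
    | verB u' => exact Or.inr ⟨u', rfl⟩
    | ver v' =>
      exfalso
      have c : ∀ z : PosElem VG ↥G.edgeSet, IsMax4 z → PosLe' εH (PosElem.verA w) (h z) := by
        intro z hz
        have hle : PosLe G εG (PosElem.ver v') z := by
          rcases hz with rfl | rfl | rfl | rfl
          · exact Relation.ReflTransGen.head (PosCov.ver_verA v') (le_verA_top1 hεG v')
          · exact Relation.ReflTransGen.head (PosCov.ver_verA v') (le_verA_top2 hεG v')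
          · exact Relation.ReflTransGen.head (PosCov.ver_verA v')
              (Relation.ReflTransGen.single (PosCov.verA_infA v'))
          · exact Relation.ReflTransGen.head (PosCov.ver_verB v')
              (Relation.ReflTransGen.single (PosCov.verB_infB v'))
        have hc := hm _ _ hle
        rw [hx2] at hc
        exact posLe_posLe' hc
      have d1 := fA a (by rw [← hia]; exact c PosElem.infA (by simp [IsMax4]))
      have d2 := fA b (by rw [← hib]; exact c PosElem.infB (by simp [IsMax4]))
      have d3 := fA s (by rw [← his]; exact c PosElem.top1 (by simp [IsMax4]))
      have d4 := fA t (by rw [← hit]; exact c PosElem.top2 (by simp [IsMax4]))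
      rcases hcov 1 with e | e | e | e
      exacts [d1 e.symm, d2 e.symm, d3 e.symm, d4 e.symm]
    | edge1 e0 =>
      exfalso
      have g : ∀ y : PosElem VH ↥H.edgeSet, IsMax4 y → PosLe H εH (PosElem.verA w) y →
          (y = mx4 s ∨ y = mx4 t) := by
        intro y hy hle
        obtain ⟨z, hz4, hzle, hzeq⟩ := hMonto (PosElem.edge1 e0) y hy (by rw [hx2]; exact hle)
        have hz' := posLe_posLe' hzle
        rcases hz4 with rfl | rfl | rfl | rfl
        · exact Or.inl (hzeq.symm.trans his)
        · exact Or.inr (hzeq.symm.trans hit)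
        · simp [PosLe'] at hz'
        · simp [PosLe'] at hz'
      have g1 := g PosElem.infA (by simp [IsMax4]) pArA
      have g2 := g PosElem.top1 (by simp [IsMax4]) pAT1
      have g3 := g PosElem.top2 (by simp [IsMax4]) pAT2
      refine fin_edge1 s t ?_ ?_ ?_
      · rcases g1 with e | e
        · exact Or.inl (cvtA s e).symm
        · exact Or.inr (cvtA t e).symm
      · rcases g2 with e | e
        · exact Or.inl (cvtT1 s e).symm
        · exact Or.inr (cvtT1 t e).symm
      · rcases g3 with e | e
        · exact Or.inl (cvtT2 s e).symm
        · exact Or.inr (cvtT2 t e).symm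
    | edge2 e0 =>
      exfalso
      have g : ∀ y : PosElem VH ↥H.edgeSet, IsMax4 y → PosLe H εH (PosElem.verA w) y →
          (y = mx4 s ∨ y = mx4 t) := by
        intro y hy hle
        obtain ⟨z, hz4, hzle, hzeq⟩ := hMonto (PosElem.edge2 e0) y hy (by rw [hx2]; exact hle)
        have hz' := posLe_posLe' hzle
        rcases hz4 with rfl | rfl | rfl | rfl
        · exact Or.inl (hzeq.symm.trans his)
        · exact Or.inr (hzeq.symm.trans hit)
        · simp [PosLe'] at hz'
        · simp [PosLe'] at hz'
      have g1 := g PosElem.infA (by simp [IsMax4]) pArA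
      have g2 := g PosElem.top1 (by simp [IsMax4]) pAT1
      have g3 := g PosElem.top2 (by simp [IsMax4]) pAT2
      refine fin_edge1 s t ?_ ?_ ?_
      · rcases g1 with e | e
        · exact Or.inl (cvtA s e).symm
        · exact Or.inr (cvtA t e).symm
      · rcases g2 with e | e
        · exact Or.inl (cvtT1 s e).symm
        · exact Or.inr (cvtT1 t e).symm
      · rcases g3 with e | e
        · exact Or.inl (cvtT2 s e).symm
        · exact Or.inr (cvtT2 t e).symm
    | top1 =>
      exfalso
      have hz := himg PosElem.top1 (by simp [IsMax4]) PosElem.infA (by rw [hx2]; exact pArA)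
      rw [hx2] at hz; exact absurd hz (by simp)
    | top2 =>
      exfalso
      have hz := himg PosElem.top2 (by simp [IsMax4]) PosElem.infA (by rw [hx2]; exact pArA)
      rw [hx2] at hz; exact absurd hz (by simp)
    | infA =>
      exfalso
      have hz := himg PosElem.infA (by simp [IsMax4]) PosElem.infA (by rw [hx2]; exact pArA)
      rw [hx2] at hz; exact absurd hz (by simp)
    | infB =>
      exfalso
      have hz := himg PosElem.infB (by simp [IsMax4]) PosElem.infA (by rw [hx2]; exact pArA)
      rw [hx2] at hz; exact absurd hz (by simp)
  obtain ⟨x3, hx3⟩ := hsurj (PosElem.verB w)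
  have hx3c : (∃ u', x3 = PosElem.verA u') ∨ (∃ u', x3 = PosElem.verB u') := by
    cases x3 with
    | verA u' => exact Or.inl ⟨u', rfl⟩
    | verB u' => exact Or.inr ⟨u', rfl⟩
    | ver v' =>
      exfalso
      have c : ∀ z : PosElem VG ↥G.edgeSet, IsMax4 z → PosLe' εH (PosElem.verB w) (h z) := by
        intro z hz
        have hle : PosLe G εG (PosElem.ver v') z := by
          rcases hz with rfl | rfl | rfl | rfl
          · exact Relation.ReflTransGen.head (PosCov.ver_verA v') (le_verA_top1 hεG v')
          · exact Relation.ReflTransGen.head (PosCov.ver_verA v') (le_verA_top2 hεG v')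
          · exact Relation.ReflTransGen.head (PosCov.ver_verA v')
              (Relation.ReflTransGen.single (PosCov.verA_infA v'))
          · exact Relation.ReflTransGen.head (PosCov.ver_verB v')
              (Relation.ReflTransGen.single (PosCov.verB_infB v'))
        have hc := hm _ _ hle
        rw [hx3] at hc
        exact posLe_posLe' hc
      have d1 := fB a (by rw [← hia]; exact c PosElem.infA (by simp [IsMax4]))
      have d2 := fB b (by rw [← hib]; exact c PosElem.infB (by simp [IsMax4]))
      have d3 := fB s (by rw [← his]; exact c PosElem.top1 (by simp [IsMax4]))
      have d4 := fB t (by rw [← hit]; exact c PosElem.top2 (by simp [IsMax4]))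
      rcases hcov 0 with e | e | e | e
      exacts [d1 e.symm, d2 e.symm, d3 e.symm, d4 e.symm]
    | edge1 e0 =>
      exfalso
      have g : ∀ y : PosElem VH ↥H.edgeSet, IsMax4 y → PosLe H εH (PosElem.verB w) y →
          (y = mx4 s ∨ y = mx4 t) := by
        intro y hy hle
        obtain ⟨z, hz4, hzle, hzeq⟩ := hMonto (PosElem.edge1 e0) y hy (by rw [hx3]; exact hle)
        have hz' := posLe_posLe' hzle
        rcases hz4 with rfl | rfl | rfl | rfl
        · exact Or.inl (hzeq.symm.trans his)
        · exact Or.inr (hzeq.symm.trans hit)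
        · simp [PosLe'] at hz'
        · simp [PosLe'] at hz'
      have g1 := g PosElem.infB (by simp [IsMax4]) pBrB
      have g2 := g PosElem.top1 (by simp [IsMax4]) pBT1
      have g3 := g PosElem.top2 (by simp [IsMax4]) pBT2
      refine fin_edge2 s t ?_ ?_ ?_
      · rcases g1 with e | e
        · exact Or.inl (cvtB s e).symm
        · exact Or.inr (cvtB t e).symm
      · rcases g2 with e | e
        · exact Or.inl (cvtT1 s e).symm
        · exact Or.inr (cvtT1 t e).symm
      · rcases g3 with e | e
        · exact Or.inl (cvtT2 s e).symm
        · exact Or.inr (cvtT2 t e).symm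
    | edge2 e0 =>
      exfalso
      have g : ∀ y : PosElem VH ↥H.edgeSet, IsMax4 y → PosLe H εH (PosElem.verB w) y →
          (y = mx4 s ∨ y = mx4 t) := by
        intro y hy hle
        obtain ⟨z, hz4, hzle, hzeq⟩ := hMonto (PosElem.edge2 e0) y hy (by rw [hx3]; exact hle)
        have hz' := posLe_posLe' hzle
        rcases hz4 with rfl | rfl | rfl | rfl
        · exact Or.inl (hzeq.symm.trans his)
        · exact Or.inr (hzeq.symm.trans hit)
        · simp [PosLe'] at hz'
        · simp [PosLe'] at hz'
      have g1 := g PosElem.infB (by simp [IsMax4]) pBrB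
      have g2 := g PosElem.top1 (by simp [IsMax4]) pBT1
      have g3 := g PosElem.top2 (by simp [IsMax4]) pBT2
      refine fin_edge2 s t ?_ ?_ ?_
      · rcases g1 with e | e
        · exact Or.inl (cvtB s e).symm
        · exact Or.inr (cvtB t e).symm
      · rcases g2 with e | e
        · exact Or.inl (cvtT1 s e).symm
        · exact Or.inr (cvtT1 t e).symm
      · rcases g3 with e | e
        · exact Or.inl (cvtT2 s e).symm
        · exact Or.inr (cvtT2 t e).symm
    | top1 =>
      exfalso
      have hz := himg PosElem.top1 (by simp [IsMax4]) PosElem.infB (by rw [hx3]; exact pBrB)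
      rw [hx3] at hz; exact absurd hz (by simp)
    | top2 =>
      exfalso
      have hz := himg PosElem.top2 (by simp [IsMax4]) PosElem.infB (by rw [hx3]; exact pBrB)
      rw [hx3] at hz; exact absurd hz (by simp)
    | infA =>
      exfalso
      have hz := himg PosElem.infA (by simp [IsMax4]) PosElem.infB (by rw [hx3]; exact pBrB)
      rw [hx3] at hz; exact absurd hz (by simp)
    | infB =>
      exfalso
      have hz := himg PosElem.infB (by simp [IsMax4]) PosElem.infB (by rw [hx3]; exact pBrB)
      rw [hx3] at hz; exact absurd hz (by simp)
  have h2fact :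
      ((a ≠ 1 ∧ s ≠ 1 ∧ t ≠ 1 ∧ ((0 : Fin 4) = a ∨ 0 = s ∨ 0 = t) ∧
          ((2 : Fin 4) = a ∨ 2 = s ∨ 2 = t) ∧ ((3 : Fin 4) = a ∨ 3 = s ∨ 3 = t)) ∨
        (b ≠ 1 ∧ s ≠ 1 ∧ t ≠ 1 ∧ ((0 : Fin 4) = b ∨ 0 = s ∨ 0 = t) ∧
          ((2 : Fin 4) = b ∨ 2 = s ∨ 2 = t) ∧ ((3 : Fin 4) = b ∨ 3 = s ∨ 3 = t))) := by
    rcases hx2c with ⟨u', rfl⟩ | ⟨u', rfl⟩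
    · left
      have m1 : PosLe' εH (PosElem.verA w) (mx4 a) := by
        rw [← hia, ← hx2]
        exact posLe_posLe' (hm _ _ (Relation.ReflTransGen.single (PosCov.verA_infA u')))
      have m2 : PosLe' εH (PosElem.verA w) (mx4 s) := by
        rw [← his, ← hx2]
        exact posLe_posLe' (hm _ _ (le_verA_top1 hεG u'))
      have m3 : PosLe' εH (PosElem.verA w) (mx4 t) := by
        rw [← hit, ← hx2]
        exact posLe_posLe' (hm _ _ (le_verA_top2 hεG u'))
      have e1 := montoA u' PosElem.infA (by simp [IsMax4]) (by rw [hx2]; exact pArA)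
      have e2 := montoA u' PosElem.top1 (by simp [IsMax4]) (by rw [hx2]; exact pAT1)
      have e3 := montoA u' PosElem.top2 (by simp [IsMax4]) (by rw [hx2]; exact pAT2)
      refine ⟨fA a m1, fA s m2, fA t m3, ?_, ?_, ?_⟩
      · rcases e1 with e | e | e
        exacts [Or.inl (cvtA a e), Or.inr (Or.inl (cvtA s e)), Or.inr (Or.inr (cvtA t e))]
      · rcases e2 with e | e | e
        exacts [Or.inl (cvtT1 a e), Or.inr (Or.inl (cvtT1 s e)), Or.inr (Or.inr (cvtT1 t e))]
      · rcases e3 with e | e | e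
        exacts [Or.inl (cvtT2 a e), Or.inr (Or.inl (cvtT2 s e)), Or.inr (Or.inr (cvtT2 t e))]
    · right
      have m1 : PosLe' εH (PosElem.verA w) (mx4 b) := by
        rw [← hib, ← hx2]
        exact posLe_posLe' (hm _ _ (Relation.ReflTransGen.single (PosCov.verB_infB u')))
      have m2 : PosLe' εH (PosElem.verA w) (mx4 s) := by
        rw [← his, ← hx2]
        exact posLe_posLe' (hm _ _ (le_verB_top1 hεG u'))
      have m3 : PosLe' εH (PosElem.verA w) (mx4 t) := by
        rw [← hit, ← hx2]
        exact posLe_posLe' (hm _ _ (le_verB_top2 hεG u'))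
      have e1 := montoB u' PosElem.infA (by simp [IsMax4]) (by rw [hx2]; exact pArA)
      have e2 := montoB u' PosElem.top1 (by simp [IsMax4]) (by rw [hx2]; exact pAT1)
      have e3 := montoB u' PosElem.top2 (by simp [IsMax4]) (by rw [hx2]; exact pAT2)
      refine ⟨fA b m1, fA s m2, fA t m3, ?_, ?_, ?_⟩
      · rcases e1 with e | e | e
        exacts [Or.inl (cvtA b e), Or.inr (Or.inl (cvtA s e)), Or.inr (Or.inr (cvtA t e))]
      · rcases e2 with e | e | e
        exacts [Or.inl (cvtT1 b e), Or.inr (Or.inl (cvtT1 s e)), Or.inr (Or.inr (cvtT1 t e))]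
      · rcases e3 with e | e | e
        exacts [Or.inl (cvtT2 b e), Or.inr (Or.inl (cvtT2 s e)), Or.inr (Or.inr (cvtT2 t e))]
  have h3fact :
      ((a ≠ 0 ∧ s ≠ 0 ∧ t ≠ 0 ∧ ((1 : Fin 4) = a ∨ 1 = s ∨ 1 = t) ∧
          ((2 : Fin 4) = a ∨ 2 = s ∨ 2 = t) ∧ ((3 : Fin 4) = a ∨ 3 = s ∨ 3 = t)) ∨
        (b ≠ 0 ∧ s ≠ 0 ∧ t ≠ 0 ∧ ((1 : Fin 4) = b ∨ 1 = s ∨ 1 = t) ∧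
          ((2 : Fin 4) = b ∨ 2 = s ∨ 2 = t) ∧ ((3 : Fin 4) = b ∨ 3 = s ∨ 3 = t))) := by
    rcases hx3c with ⟨u', rfl⟩ | ⟨u', rfl⟩
    · left
      have m1 : PosLe' εH (PosElem.verB w) (mx4 a) := by
        rw [← hia, ← hx3]
        exact posLe_posLe' (hm _ _ (Relation.ReflTransGen.single (PosCov.verA_infA u')))
      have m2 : PosLe' εH (PosElem.verB w) (mx4 s) := by
        rw [← his, ← hx3]
        exact posLe_posLe' (hm _ _ (le_verA_top1 hεG u'))
      have m3 : PosLe' εH (PosElem.verB w) (mx4 t) := by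
        rw [← hit, ← hx3]
        exact posLe_posLe' (hm _ _ (le_verA_top2 hεG u'))
      have e1 := montoA u' PosElem.infB (by simp [IsMax4]) (by rw [hx3]; exact pBrB)
      have e2 := montoA u' PosElem.top1 (by simp [IsMax4]) (by rw [hx3]; exact pBT1)
      have e3 := montoA u' PosElem.top2 (by simp [IsMax4]) (by rw [hx3]; exact pBT2)
      refine ⟨fB a m1, fB s m2, fB t m3, ?_, ?_, ?_⟩
      · rcases e1 with e | e | e
        exacts [Or.inl (cvtB a e), Or.inr (Or.inl (cvtB s e)), Or.inr (Or.inr (cvtB t e))]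
      · rcases e2 with e | e | e
        exacts [Or.inl (cvtT1 a e), Or.inr (Or.inl (cvtT1 s e)), Or.inr (Or.inr (cvtT1 t e))]
      · rcases e3 with e | e | e
        exacts [Or.inl (cvtT2 a e), Or.inr (Or.inl (cvtT2 s e)), Or.inr (Or.inr (cvtT2 t e))]
    · right
      have m1 : PosLe' εH (PosElem.verB w) (mx4 b) := by
        rw [← hib, ← hx3]
        exact posLe_posLe' (hm _ _ (Relation.ReflTransGen.single (PosCov.verB_infB u')))
      have m2 : PosLe' εH (PosElem.verB w) (mx4 s) := by
        rw [← his, ← hx3]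
        exact posLe_posLe' (hm _ _ (le_verB_top1 hεG u'))
      have m3 : PosLe' εH (PosElem.verB w) (mx4 t) := by
        rw [← hit, ← hx3]
        exact posLe_posLe' (hm _ _ (le_verB_top2 hεG u'))
      have e1 := montoB u' PosElem.infB (by simp [IsMax4]) (by rw [hx3]; exact pBrB)
      have e2 := montoB u' PosElem.top1 (by simp [IsMax4]) (by rw [hx3]; exact pBT1)
      have e3 := montoB u' PosElem.top2 (by simp [IsMax4]) (by rw [hx3]; exact pBT2)
      refine ⟨fB b m1, fB s m2, fB t m3, ?_, ?_, ?_⟩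
      · rcases e1 with e | e | e
        exacts [Or.inl (cvtB b e), Or.inr (Or.inl (cvtB s e)), Or.inr (Or.inr (cvtB t e))]
      · rcases e2 with e | e | e
        exacts [Or.inl (cvtT1 b e), Or.inr (Or.inl (cvtT1 s e)), Or.inr (Or.inr (cvtT1 t e))]
      · rcases e3 with e | e | e
        exacts [Or.inl (cvtT2 b e), Or.inr (Or.inl (cvtT2 s e)), Or.inr (Or.inr (cvtT2 t e))]
  obtain ⟨hs23, ht23, hab⟩ := key_fin a b s t hcov h2fact h3fact
  constructor
  · intro hiA
    have ha0 : a = 0 := mx4_inj a 0 ((hia.symm.trans hiA).trans mx4_0.symm)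
    have hb1 : b = 1 := by
      rcases hab with ⟨_, h'⟩ | ⟨h', _⟩
      · exact h'
      · rw [ha0] at h'; exact absurd h' (by decide)
    have hBB : h PosElem.infB = PosElem.infB := by rw [hib, hb1, mx4_1]
    constructor
    · have u1 := posLe_posLe' (show PosLe H εH (PosElem.ver w) (h (PosElem.verA v)) by
        rw [← hw]; exact hm _ _ (Relation.ReflTransGen.single (PosCov.ver_verA v)))
      have u2 := posLe_posLe' (show PosLe H εH (h (PosElem.verA v)) PosElem.infA by
        rw [← hiA]; exact hm _ _ (Relation.ReflTransGen.single (PosCov.verA_infA v)))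
      have u3 := posLe_posLe' (show PosLe H εH (h (PosElem.verA v)) (mx4 s) by
        rw [← his]; exact hm _ _ (le_verA_top1 hεG v))
      cases hE : h (PosElem.verA v) with
      | verA w' =>
        rw [hE] at u1; simp [PosLe'] at u1
        rw [u1]
      | ver w' =>
        exfalso
        rw [hE] at u1; simp [PosLe'] at u1
        have hmB : PosLe H εH (h (PosElem.verA v)) PosElem.infB := by
          rw [hE, ← u1]
          exact Relation.ReflTransGen.head (PosCov.ver_verB w)
            (Relation.ReflTransGen.single (PosCov.verB_infB w))
        rcases montoA v PosElem.infB (by simp [IsMax4]) hmB with e | e | e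
        · rw [ha0, mx4_0] at e; exact absurd e (by simp)
        · rcases hs23 with h' | h'
          · rw [h', mx4_2] at e; exact absurd e (by simp)
          · rw [h', mx4_3] at e; exact absurd e (by simp)
        · rcases ht23 with h' | h'
          · rw [h', mx4_2] at e; exact absurd e (by simp)
          · rw [h', mx4_3] at e; exact absurd e (by simp)
      | verB w' => rw [hE] at u2; simp [PosLe'] at u2
      | edge1 e0 => rw [hE] at u2; simp [PosLe'] at u2
      | edge2 e0 => rw [hE] at u2; simp [PosLe'] at u2
      | top1 => rw [hE] at u2; simp [PosLe'] at u2
      | top2 => rw [hE] at u2; simp [PosLe'] at u2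
      | infB => rw [hE] at u2; simp [PosLe'] at u2
      | infA =>
        exfalso
        rw [hE] at u3
        rcases hs23 with h' | h'
        · rw [h', mx4_2] at u3; simp [PosLe'] at u3
        · rw [h', mx4_3] at u3; simp [PosLe'] at u3
    · have u1 := posLe_posLe' (show PosLe H εH (PosElem.ver w) (h (PosElem.verB v)) by
        rw [← hw]; exact hm _ _ (Relation.ReflTransGen.single (PosCov.ver_verB v)))
      have u2 := posLe_posLe' (show PosLe H εH (h (PosElem.verB v)) PosElem.infB by
        rw [← hBB]; exact hm _ _ (Relation.ReflTransGen.single (PosCov.verB_infB v)))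
      have u3 := posLe_posLe' (show PosLe H εH (h (PosElem.verB v)) (mx4 s) by
        rw [← his]; exact hm _ _ (le_verB_top1 hεG v))
      cases hE : h (PosElem.verB v) with
      | verB w' =>
        rw [hE] at u1; simp [PosLe'] at u1
        rw [u1]
      | ver w' =>
        exfalso
        rw [hE] at u1; simp [PosLe'] at u1
        have hmA : PosLe H εH (h (PosElem.verB v)) PosElem.infA := by
          rw [hE, ← u1]
          exact Relation.ReflTransGen.head (PosCov.ver_verA w)
            (Relation.ReflTransGen.single (PosCov.verA_infA w))
        rcases montoB v PosElem.infA (by simp [IsMax4]) hmA with e | e | e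
        · rw [hb1, mx4_1] at e; exact absurd e (by simp)
        · rcases hs23 with h' | h'
          · rw [h', mx4_2] at e; exact absurd e (by simp)
          · rw [h', mx4_3] at e; exact absurd e (by simp)
        · rcases ht23 with h' | h'
          · rw [h', mx4_2] at e; exact absurd e (by simp)
          · rw [h', mx4_3] at e; exact absurd e (by simp)
      | verA w' => rw [hE] at u2; simp [PosLe'] at u2
      | edge1 e0 => rw [hE] at u2; simp [PosLe'] at u2
      | edge2 e0 => rw [hE] at u2; simp [PosLe'] at u2
      | top1 => rw [hE] at u2; simp [PosLe'] at u2
      | top2 => rw [hE] at u2; simp [PosLe'] at u2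
      | infA => rw [hE] at u2; simp [PosLe'] at u2
      | infB =>
        exfalso
        rw [hE] at u3
        rcases hs23 with h' | h'
        · rw [h', mx4_2] at u3; simp [PosLe'] at u3
        · rw [h', mx4_3] at u3; simp [PosLe'] at u3
  · intro hiA
    have ha1 : a = 1 := mx4_inj a 1 ((hia.symm.trans hiA).trans mx4_1.symm)
    have hb0 : b = 0 := by
      rcases hab with ⟨h', _⟩ | ⟨_, h'⟩
      · rw [ha1] at h'; exact absurd h' (by decide)
      · exact h'
    have hBA : h PosElem.infB = PosElem.infA := by rw [hib, hb0, mx4_0]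
    constructor
    · have u1 := posLe_posLe' (show PosLe H εH (PosElem.ver w) (h (PosElem.verA v)) by
        rw [← hw]; exact hm _ _ (Relation.ReflTransGen.single (PosCov.ver_verA v)))
      have u2 := posLe_posLe' (show PosLe H εH (h (PosElem.verA v)) PosElem.infB by
        rw [← hiA]; exact hm _ _ (Relation.ReflTransGen.single (PosCov.verA_infA v)))
      have u3 := posLe_posLe' (show PosLe H εH (h (PosElem.verA v)) (mx4 s) by
        rw [← his]; exact hm _ _ (le_verA_top1 hεG v))
      cases hE : h (PosElem.verA v) with
      | verB w' =>
        rw [hE] at u1; simp [PosLe'] at u1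
        rw [u1]
      | ver w' =>
        exfalso
        rw [hE] at u1; simp [PosLe'] at u1
        have hmA : PosLe H εH (h (PosElem.verA v)) PosElem.infA := by
          rw [hE, ← u1]
          exact Relation.ReflTransGen.head (PosCov.ver_verA w)
            (Relation.ReflTransGen.single (PosCov.verA_infA w))
        rcases montoA v PosElem.infA (by simp [IsMax4]) hmA with e | e | e
        · rw [ha1, mx4_1] at e; exact absurd e (by simp)
        · rcases hs23 with h' | h'
          · rw [h', mx4_2] at e; exact absurd e (by simp)
          · rw [h', mx4_3] at e; exact absurd e (by simp)
        · rcases ht23 with h' | h'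
          · rw [h', mx4_2] at e; exact absurd e (by simp)
          · rw [h', mx4_3] at e; exact absurd e (by simp)
      | verA w' => rw [hE] at u2; simp [PosLe'] at u2
      | edge1 e0 => rw [hE] at u2; simp [PosLe'] at u2
      | edge2 e0 => rw [hE] at u2; simp [PosLe'] at u2
      | top1 => rw [hE] at u2; simp [PosLe'] at u2
      | top2 => rw [hE] at u2; simp [PosLe'] at u2
      | infA => rw [hE] at u2; simp [PosLe'] at u2
      | infB =>
        exfalso
        rw [hE] at u3
        rcases hs23 with h' | h'
        · rw [h', mx4_2] at u3; simp [PosLe'] at u3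
        · rw [h', mx4_3] at u3; simp [PosLe'] at u3
    · have u1 := posLe_posLe' (show PosLe H εH (PosElem.ver w) (h (PosElem.verB v)) by
        rw [← hw]; exact hm _ _ (Relation.ReflTransGen.single (PosCov.ver_verB v)))
      have u2 := posLe_posLe' (show PosLe H εH (h (PosElem.verB v)) PosElem.infA by
        rw [← hBA]; exact hm _ _ (Relation.ReflTransGen.single (PosCov.verB_infB v)))
      have u3 := posLe_posLe' (show PosLe H εH (h (PosElem.verB v)) (mx4 s) by
        rw [← his]; exact hm _ _ (le_verB_top1 hεG v))
      cases hE : h (PosElem.verB v) with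
      | verA w' =>
        rw [hE] at u1; simp [PosLe'] at u1
        rw [u1]
      | ver w' =>
        exfalso
        rw [hE] at u1; simp [PosLe'] at u1
        have hmB : PosLe H εH (h (PosElem.verB v)) PosElem.infB := by
          rw [hE, ← u1]
          exact Relation.ReflTransGen.head (PosCov.ver_verB w)
            (Relation.ReflTransGen.single (PosCov.verB_infB w))
        rcases montoB v PosElem.infB (by simp [IsMax4]) hmB with e | e | e
        · rw [hb0, mx4_0] at e; exact absurd e (by simp)
        · rcases hs23 with h' | h'
          · rw [h', mx4_2] at e; exact absurd e (by simp)
          · rw [h', mx4_3] at e; exact absurd e (by simp)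
        · rcases ht23 with h' | h'
          · rw [h', mx4_2] at e; exact absurd e (by simp)
          · rw [h', mx4_3] at e; exact absurd e (by simp)
      | verB w' => rw [hE] at u2; simp [PosLe'] at u2
      | edge1 e0 => rw [hE] at u2; simp [PosLe'] at u2
      | edge2 e0 => rw [hE] at u2; simp [PosLe'] at u2
      | top1 => rw [hE] at u2; simp [PosLe'] at u2
      | top2 => rw [hE] at u2; simp [PosLe'] at u2
      | infB => rw [hE] at u2; simp [PosLe'] at u2
      | infA =>
        exfalso
        rw [hE] at u3
        rcases hs23 with h' | h'
        · rw [h', mx4_2] at u3; simp [PosLe'] at u3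
        · rw [h', mx4_3] at u3; simp [PosLe'] at u3
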